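/- Assume (M,d,μ) satisfies the volume doubling property VD with constants C_μ, d2 and with R0 = diam(M) (i.e. V(x,R)/V(x,r) ≤ C_μ (R/r)^{d2} for all x ∈ M and 0 < r ≤ R < 2·diam(M)). Let φ be a scale function on M. Let Θ : M × (0,∞) → [1,∞) be Borel measurable such that: (i) for each x ∈ M the map r ↦ Θ(x,r) is nondecreasing; (ii) there exist constants C ≥ 1 and γ0 > 0 with Θ(x,R)/Θ(x,r) ≤ C (φ(x,R)/φ(x,r))(r/R)^{γ0} for all x ∈ M and 0 < r ≤ R < ∞; (iii) ∫_{B(x,r)} Θ(y,r) μ(dy) ≤ C V(x,r) for all x ∈ M and r ∈ (0, diam(M)). Let J : M × M → [0,∞] be a symmetric Borel function satisfying, for some C′ > 0 and all distinct x,y ∈ M, J(x,y) ≤ C′ Θ(x,d(x,y)) Θ(y,d(x,y)) / (V(x,d(x,y)) φ(x,d(x,y))). Then there exists a constant C_J > 0 such that ∫_{M \ B(x,r)} J(x,y) μ(dy) ≤ C_J Θ(x,r)/φ(x,r) for all x ∈ M and r ∈ (0, diam(M)). -/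

import Mathlib

open MeasureTheory Metric Set
open scoped ENNReal

lemma exists_dyadic_aux (t : ℝ) (ht : 1 ≤ t) : ∃ n : ℕ, (2:ℝ)^n ≤ t ∧ t < 2^(n+1) := by
  classical
  have hex : ∃ k : ℕ, t < (2:ℝ)^k := pow_unbounded_of_one_lt t one_lt_two
  have hk := Nat.find_spec hex
  have hk0 : Nat.find hex ≠ 0 := by
    intro h
    rw [h] at hk
    simp at hk
    linarith
  obtain ⟨n, hn⟩ := Nat.exists_eq_succ_of_ne_zero hk0
  refine ⟨n, ?_, ?_⟩
  · have := Nat.find_min hex (m := n) (by omega)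
    push_neg at this
    exact this
  · have : Nat.find hex = n + 1 := hn
    rw [this] at hk
    exact hk

lemma pow_rpow_comm_aux (a : ℝ) (ha : 0 ≤ a) (m : ℕ) (γ : ℝ) : (a^m)^γ = (a^γ)^m := by
  rw [← Real.rpow_natCast a m, ← Real.rpow_mul ha, mul_comm, Real.rpow_mul ha,
    Real.rpow_natCast]

set_option maxHeartbeats 1600000 in
theorem jump_density_bound_implies_tail_condition
    {M : Type*} [MetricSpace M] [MeasurableSpace M] [BorelSpace M] [ProperSpace M]
    (μ : Measure M) [IsLocallyFiniteMeasure μ] [μ.IsOpenPosMeasure]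
    -- volume doubling with R0 = diam M
    (Cμ d2 : ℝ) (hCμ : 0 < Cμ) (hd2 : 0 < d2)
    (hVD : ∀ (x : M) (r R : ℝ), 0 < r → r ≤ R →
      ENNReal.ofReal R < 2 * EMetric.diam (Set.univ : Set M) →
      μ (ball x R) ≤ ENNReal.ofReal (Cμ * (R / r) ^ d2) * μ (ball x r))
    -- scale function φ
    (φ : M → ℝ → ℝ) (β1 β2 cL cU C0 : ℝ)
    (hβ1 : 0 < β1) (hβ12 : β1 ≤ β2) (hcL : 0 < cL) (hcU : 0 < cU) (hC0 : 1 ≤ C0)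
    (hφmeas : Measurable (Function.uncurry φ))
    (hφpos : ∀ (x : M) (r : ℝ), 0 < r → 0 < φ x r)
    (hφmono : ∀ x : M, StrictMonoOn (φ x) (Set.Ioi 0))
    (hφcont : ∀ x : M, ContinuousOn (φ x) (Set.Ioi 0))
    (hφscaleL : ∀ (x : M) (r R : ℝ), 0 < r → r ≤ R → cL * (R / r) ^ β1 ≤ φ x R / φ x r)
    (hφscaleU : ∀ (x : M) (r R : ℝ), 0 < r → r ≤ R → φ x R / φ x r ≤ cU * (R / r) ^ β2)
    (hφcomp : ∀ (x y : M) (r : ℝ), 0 < r → dist x y ≤ r → φ y r ≤ C0 * φ x r)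
    -- admissible weight function Θ
    (Θ : M → ℝ → ℝ) (C γ0 : ℝ) (hC : 1 ≤ C) (hγ0 : 0 < γ0)
    (hΘmeas : Measurable (Function.uncurry Θ))
    (hΘ1 : ∀ (x : M) (r : ℝ), 0 < r → 1 ≤ Θ x r)
    (hΘmono : ∀ x : M, MonotoneOn (Θ x) (Set.Ioi 0))
    (hΘscale : ∀ (x : M) (r R : ℝ), 0 < r → r ≤ R →
      Θ x R / Θ x r ≤ C * (φ x R / φ x r) * (r / R) ^ γ0)
    (hΘvol : ∀ (x : M) (r : ℝ), 0 < r →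
      ENNReal.ofReal r < EMetric.diam (Set.univ : Set M) →
      ∫⁻ y in ball x r, ENNReal.ofReal (Θ y r) ∂μ ≤ ENNReal.ofReal C * μ (ball x r))
    -- jump density and its pointwise upper bound
    (J : M → M → ℝ≥0∞) (C' : ℝ) (hC' : 0 < C')
    (hJsymm : ∀ x y : M, J x y = J y x)
    (hJmeas : Measurable (Function.uncurry J))
    (hJle : ∀ x y : M, x ≠ y →
      J x y ≤ ENNReal.ofReal (C' * Θ x (dist x y) * Θ y (dist x y) / φ x (dist x y)) /
        μ (ball x (dist x y))) :
    ∃ CJ : ℝ, 0 < CJ ∧ ∀ (x : M) (r : ℝ), 0 < r →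
      ENNReal.ofReal r < EMetric.diam (Set.univ : Set M) →
      ∫⁻ y in (ball x r)ᶜ, J x y ∂μ ≤ ENNReal.ofReal (CJ * Θ x r / φ x r) := by
  classical
  set D := EMetric.diam (Set.univ : Set M) with hDdef
  have hCpos : (0:ℝ) < C := lt_of_lt_of_le one_pos hC
  set q : ℝ := ((2:ℝ)⁻¹) ^ γ0 with hqdef
  have hq0 : 0 < q := Real.rpow_pos_of_pos (by norm_num) _
  have hq1 : q < 1 := Real.rpow_lt_one (by norm_num) (by norm_num) hγ0
  have h1q : (0:ℝ) < 1 - q := by linarith only [hq1]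
  have h2β2 : (0:ℝ) < (2:ℝ) ^ β2 := Real.rpow_pos_of_pos (by norm_num) _
  have h4β2 : (0:ℝ) < (4:ℝ) ^ β2 := Real.rpow_pos_of_pos (by norm_num) _
  have h2d2 : (0:ℝ) < (2:ℝ) ^ d2 := Real.rpow_pos_of_pos (by norm_num) _
  have h3d2 : (0:ℝ) < (3:ℝ) ^ d2 := Real.rpow_pos_of_pos (by norm_num) _
  have h6d2 : (0:ℝ) < (6:ℝ) ^ d2 := Real.rpow_pos_of_pos (by norm_num) _
  set K1 : ℝ := C * cU * (2:ℝ) ^ β2 with hK1def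
  have hK1 : 0 < K1 := by rw [hK1def]; positivity
  set K3 : ℝ := C * cU * (4:ℝ) ^ β2 with hK3def
  have hK3 : 0 < K3 := by rw [hK3def]; positivity
  set Kvol : ℝ := C * (Cμ * (2:ℝ)^d2) + K3 * ((Cμ * (6:ℝ)^d2) * (C * (Cμ * (3:ℝ)^d2)))
    with hKvoldef
  have hKvol : 0 < Kvol := by
    rw [hKvoldef]
    have h1 : 0 < C * (Cμ * (2:ℝ)^d2) := by positivity
    have h2 : 0 < K3 * ((Cμ * (6:ℝ)^d2) * (C * (Cμ * (3:ℝ)^d2))) := by positivity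
    linarith
  refine ⟨C' * K1 * Kvol * (1 - q)⁻¹,
    mul_pos (mul_pos (mul_pos hC' hK1) hKvol) (inv_pos.mpr h1q), ?_⟩
  intro x r hr hrD
  have hφr : 0 < φ x r := hφpos x r hr
  have hΘr : (0:ℝ) < Θ x r := lt_of_lt_of_le one_pos (hΘ1 x r hr)
  set B' : ℝ := C' * K1 * (Θ x r / φ x r) * Kvol with hB'def
  have hB' : 0 < B' := by
    rw [hB'def]
    exact mul_pos (mul_pos (mul_pos hC' hK1) (div_pos hΘr hφr)) hKvol
  set A : ℕ → Set M := fun n => {y : M | 2^n * r ≤ dist x y ∧ dist x y < 2^(n+1) * r}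
    with hAdef
  have hmeasΘc : ∀ c : ℝ, Measurable fun y : M => ENNReal.ofReal (Θ y c) := fun c =>
    ENNReal.measurable_ofReal.comp (hΘmeas.comp (measurable_id.prodMk measurable_const))
  have hcover : (ball x r)ᶜ ⊆ ⋃ n, A n := by
    intro y hy
    have hyr : r ≤ dist x y := by
      simp only [mem_compl_iff, mem_ball, not_lt] at hy
      rwa [dist_comm]
    obtain ⟨n, h1, h2⟩ := exists_dyadic_aux (dist x y / r) ((one_le_div hr).mpr hyr)
    exact mem_iUnion.mpr ⟨n, (le_div_iff₀ hr).mp h1, (div_lt_iff₀ hr).mp h2⟩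
  -- the key per-annulus estimate
  have key : ∀ n : ℕ, ∫⁻ y in A n, J x y ∂μ ≤ ENNReal.ofReal (B' * q ^ n) := by
    intro n
    set rn : ℝ := 2^n * r with hrndef
    have hrn0 : 0 < rn := by rw [hrndef]; positivity
    have h2n1 : (1:ℝ) ≤ 2^n := one_le_pow₀ (by norm_num)
    have hrle : r ≤ rn := by rw [hrndef]; exact le_mul_of_one_le_left hr.le h2n1
    have h2rn0 : 0 < 2*rn := by linarith only [hrn0]
    have h2rn : (2:ℝ)^(n+1) * r = 2 * rn := by rw [hrndef]; ring
    have hA2 : ∀ y ∈ A n, rn ≤ dist x y ∧ dist x y < 2*rn := by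
      intro y hy
      obtain ⟨h1, h2⟩ := hy
      rw [h2rn] at h2
      exact ⟨h1, h2⟩
    have hμ0 : μ (ball x rn) ≠ 0 := (measure_ball_pos μ x hrn0).ne'
    have hμt : μ (ball x rn) ≠ ⊤ := measure_ball_lt_top.ne
    have hφrn : 0 < φ x rn := hφpos x rn hrn0
    have hφ2rn : 0 < φ x (2*rn) := hφpos x (2*rn) h2rn0
    -- geometric factor
    have hqn : (r / (2*rn)) ^ γ0 ≤ q ^ n := by
      have e1 : r / (2*rn) = ((2:ℝ)⁻¹)^(n+1) := by
        have h1 : (2:ℝ)*rn = 2^(n+1) * r := by rw [hrndef]; ring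
        rw [h1, inv_pow]
        rw [eq_comm, inv_eq_iff_eq_inv, eq_comm, inv_div]
        rw [div_eq_iff hr.ne']
      rw [e1, pow_rpow_comm_aux (2:ℝ)⁻¹ (by norm_num) (n+1) γ0, ← hqdef, pow_succ]
      calc q^n * q ≤ q^n * 1 := by
            exact mul_le_mul_of_nonneg_left hq1.le (pow_nonneg hq0.le n)
        _ = q^n := mul_one _
    have hφ2le : φ x (2*rn) ≤ cU * (2:ℝ)^β2 * φ x rn := by
      have h := hφscaleU x rn (2*rn) hrn0 (by linarith only [hrn0])
      have e : (2*rn)/rn = 2 := by field_simp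
      rw [e] at h
      have := mul_le_mul_of_nonneg_right h hφrn.le
      rwa [div_mul_cancel₀ _ hφrn.ne'] at this
    have hnum' : Θ x (2*rn) ≤ K1 * q^n * (Θ x r / φ x r) * φ x rn := by
      have h := hΘscale x r (2*rn) hr (by linarith only [hrn0, hrle])
      have step : Θ x (2*rn) ≤ C * (φ x (2*rn) / φ x r) * (r/(2*rn))^γ0 * Θ x r := by
        have := mul_le_mul_of_nonneg_right h hΘr.le
        rwa [div_mul_cancel₀ _ hΘr.ne'] at this
      refine step.trans ?_
      have hb : (0:ℝ) ≤ C * ((cU * 2^β2 * φ x rn) / φ x r) :=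
        mul_nonneg hCpos.le (div_nonneg (by positivity) hφr.le)
      have e2 : C * (φ x (2*rn) / φ x r) * (r/(2*rn))^γ0 * Θ x r
          ≤ C * ((cU * 2^β2 * φ x rn) / φ x r) * q^n * Θ x r := by
        refine mul_le_mul_of_nonneg_right ?_ hΘr.le
        refine mul_le_mul ?_ hqn (Real.rpow_nonneg (by positivity) _) hb
        exact mul_le_mul_of_nonneg_left
          (div_le_div_of_nonneg_right hφ2le hφr.le) hCpos.le
      refine e2.trans (le_of_eq ?_)
      rw [hK1def]; ring
    set B'' : ℝ := C' * (K1 * q^n * (Θ x r / φ x r)) with hB''def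
    have hB''0 : 0 < B'' := by
      rw [hB''def]
      exact mul_pos hC' (mul_pos (mul_pos hK1 (pow_pos hq0 n)) (div_pos hΘr hφr))
    have hpt : ∀ y ∈ A n,
        J x y ≤ ENNReal.ofReal (B'' * Θ y (2*rn)) / μ (ball x rn) := by
      intro y hy
      obtain ⟨h1, h2⟩ := hA2 y hy
      have hs0 : 0 < dist x y := lt_of_lt_of_le hrn0 h1
      have hxy : x ≠ y := dist_pos.mp hs0
      refine (hJle x y hxy).trans ?_
      refine ENNReal.div_le_div (ENNReal.ofReal_le_ofReal ?_)
        (measure_mono (ball_subset_ball h1))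
      have hΘxsp : (0:ℝ) < Θ x (dist x y) := lt_of_lt_of_le one_pos (hΘ1 x _ hs0)
      have hΘysp : (0:ℝ) < Θ y (dist x y) := lt_of_lt_of_le one_pos (hΘ1 y _ hs0)
      have hΘx2p : (0:ℝ) < Θ x (2*rn) := lt_of_lt_of_le one_pos (hΘ1 x _ h2rn0)
      have hΘy2p : (0:ℝ) < Θ y (2*rn) := lt_of_lt_of_le one_pos (hΘ1 y _ h2rn0)
      have hΘxs : Θ x (dist x y) ≤ Θ x (2*rn) :=
        hΘmono x (mem_Ioi.mpr hs0) (mem_Ioi.mpr h2rn0) h2.le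
      have hΘys : Θ y (dist x y) ≤ Θ y (2*rn) :=
        hΘmono y (mem_Ioi.mpr hs0) (mem_Ioi.mpr h2rn0) h2.le
      have hφs : φ x rn ≤ φ x (dist x y) :=
        (hφmono x).monotoneOn (mem_Ioi.mpr hrn0) (mem_Ioi.mpr hs0) h1
      calc C' * Θ x (dist x y) * Θ y (dist x y) / φ x (dist x y)
          ≤ C' * Θ x (2*rn) * Θ y (2*rn) / φ x rn := by
            refine div_le_div₀ (by positivity) ?_ hφrn hφs
            exact mul_le_mul (mul_le_mul_of_nonneg_left hΘxs hC'.le) hΘys hΘysp.le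
              (by positivity)
        _ ≤ B'' * Θ y (2*rn) := by
            rw [div_le_iff₀ hφrn]
            calc C' * Θ x (2*rn) * Θ y (2*rn)
                = (C' * Θ y (2*rn)) * Θ x (2*rn) := by ring
              _ ≤ (C' * Θ y (2*rn)) * (K1 * q^n * (Θ x r / φ x r) * φ x rn) :=
                  mul_le_mul_of_nonneg_left hnum' (by positivity)
              _ = B'' * Θ y (2*rn) * φ x rn := by rw [hB''def]; ring
    -- the crucial volume estimate on the annulus
    have hDle2D : D ≤ 2 * D := by
      nth_rewrite 1 [← one_mul D]
      exact mul_le_mul_left one_le_two D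
    have hsub : ∫⁻ y in A n, ENNReal.ofReal (Θ y (2*rn)) ∂μ
        ≤ ENNReal.ofReal Kvol * μ (ball x rn) := by
      rcases lt_or_ge (ENNReal.ofReal (2*rn)) D with hcase | hcase
      · -- easy case : 2 rn below the diameter
        have hsubset : A n ⊆ ball x (2*rn) := fun y hy => mem_ball'.mpr (hA2 y hy).2
        calc ∫⁻ y in A n, ENNReal.ofReal (Θ y (2*rn)) ∂μ
            ≤ ∫⁻ y in ball x (2*rn), ENNReal.ofReal (Θ y (2*rn)) ∂μ :=
              lintegral_mono_set hsubset
          _ ≤ ENNReal.ofReal C * μ (ball x (2*rn)) := hΘvol x (2*rn) h2rn0 hcase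
          _ ≤ ENNReal.ofReal C * (ENNReal.ofReal (Cμ * ((2*rn)/rn)^d2) * μ (ball x rn)) :=
              mul_le_mul_right
                (hVD x rn (2*rn) hrn0 (by linarith only [hrn0]) (lt_of_lt_of_le hcase hDle2D)) _
          _ ≤ ENNReal.ofReal Kvol * μ (ball x rn) := by
              rw [← mul_assoc, ← ENNReal.ofReal_mul hCpos.le]
              refine mul_le_mul_left (ENNReal.ofReal_le_ofReal ?_) _
              have e : (2*rn)/rn = 2 := by field_simp
              rw [e, hKvoldef]
              have h2 : 0 < K3 * ((Cμ * (6:ℝ)^d2) * (C * (Cμ * (3:ℝ)^d2))) := by positivity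
              linarith only [h2]
      · -- boundary case : 2 rn reaches past the diameter
        rcases (A n).eq_empty_or_nonempty with hA | ⟨y0, hy0⟩
        · rw [hA]
          simp
        · have hDne : D ≠ ⊤ := by
            intro h
            rw [h] at hcase
            exact ENNReal.ofReal_ne_top (top_le_iff.mp hcase)
          set Dr : ℝ := D.toReal with hDrdef
          have hD0 : (0:ℝ≥0∞) < D := lt_of_le_of_lt (zero_le (a := ENNReal.ofReal r)) hrD
          have hDr0 : 0 < Dr := ENNReal.toReal_pos hD0.ne' hDne
          have hDD : D = ENNReal.ofReal Dr := (ENNReal.ofReal_toReal hDne).symm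
          have hdistDr : ∀ w z : M, dist w z ≤ Dr := by
            intro w z
            rw [dist_edist, hDrdef]
            exact ENNReal.toReal_mono hDne
              (EMetric.edist_le_diam_of_mem (mem_univ _) (mem_univ _))
          have hrnDr : rn ≤ Dr := le_trans (hA2 y0 hy0).1 (hdistDr x y0)
          have hDr2rn : Dr ≤ 2*rn := by
            have h := ENNReal.toReal_mono ENNReal.ofReal_ne_top hcase
            rwa [ENNReal.toReal_ofReal (by positivity), ← hDrdef] at h
          set ρ : ℝ := rn/2 with hρdef
          have hρ0 : 0 < ρ := by rw [hρdef]; linarith only [hrn0]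
          have hρD : ENNReal.ofReal ρ < D := by
            rw [hDD]
            exact (ENNReal.ofReal_lt_ofReal_iff hDr0).mpr (by rw [hρdef]; linarith only [hrnDr, hDr0, hrn0])
          set R' : ℝ := 3/2 * Dr with hR'def
          have hρR' : ρ ≤ R' := by rw [hρdef, hR'def]; linarith only [hrnDr, hDr0, hrn0]
          have hballR' : ∀ z : M, ball z R' = univ := by
            intro z
            ext w
            simp only [mem_ball, mem_univ, iff_true]
            have := hdistDr w z
            rw [hR'def]; linarith only [this, hDr0]
          have hR'2D : ENNReal.ofReal R' < 2*D := by
            rw [hDD, show (2:ℝ≥0∞) = ENNReal.ofReal 2 by simp,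
              ← ENNReal.ofReal_mul (by norm_num : (0:ℝ) ≤ 2)]
            exact (ENNReal.ofReal_lt_ofReal_iff (by linarith only [hDr0])).mpr (by rw [hR'def]; linarith only [hDr0])
          have hcpt : IsCompact (univ : Set M) :=
            (isCompact_closedBall x Dr).of_isClosed_subset isClosed_univ
              (fun w _ => mem_closedBall.mpr (hdistDr w x))
          have hμUt : μ (univ : Set M) ≠ ⊤ := hcpt.measure_lt_top.ne
          have hμU0 : μ (univ : Set M) ≠ 0 := (isOpen_univ.measure_pos μ ⟨x, trivial⟩).ne'
          haveI : IsFiniteMeasure μ := ⟨lt_top_iff_ne_top.mpr hμUt⟩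
          -- reverse inequality : the whole space has comparable volume to any ρ-ball
          have hrev : ∀ y : M, μ (univ : Set M)
              ≤ ENNReal.ofReal (Cμ * (6:ℝ)^d2) * μ (ball y ρ) := by
            intro y
            have h := hVD y ρ R' hρ0 hρR' hR'2D
            rw [hballR' y] at h
            refine h.trans (mul_le_mul_left (ENNReal.ofReal_le_ofReal ?_) _)
            have hratio : R'/ρ ≤ 6 := by
              rw [div_le_iff₀ hρ0, hR'def, hρdef]; linarith only [hDr2rn]
            have hrp : (R'/ρ)^d2 ≤ (6:ℝ)^d2 :=
              Real.rpow_le_rpow (by positivity) hratio hd2.le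
            exact mul_le_mul_of_nonneg_left hrp hCμ.le
          -- Θ at scale 2 rn is controlled by Θ at scale ρ
          have hΘρ : ∀ y : M, Θ y (2*rn) ≤ K3 * Θ y ρ := by
            intro y
            have hΘρp : (0:ℝ) < Θ y ρ := lt_of_lt_of_le one_pos (hΘ1 y ρ hρ0)
            have hρ2rn : ρ ≤ 2*rn := by rw [hρdef]; linarith only [hrn0]
            have h := hΘscale y ρ (2*rn) hρ0 hρ2rn
            have step : Θ y (2*rn) ≤ C * (φ y (2*rn) / φ y ρ) * (ρ/(2*rn))^γ0 * Θ y ρ := by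
              have := mul_le_mul_of_nonneg_right h hΘρp.le
              rwa [div_mul_cancel₀ _ hΘρp.ne'] at this
            refine step.trans ?_
            have hφρ : 0 < φ y ρ := hφpos y ρ hρ0
            have hφup : φ y (2*rn) / φ y ρ ≤ cU * (4:ℝ)^β2 := by
              have h4 := hφscaleU y ρ (2*rn) hρ0 hρ2rn
              have e : (2*rn)/ρ = 4 := by rw [hρdef]; field_simp; ring
              rwa [e] at h4
            have hpow1 : (ρ/(2*rn))^γ0 ≤ 1 :=
              Real.rpow_le_one (by positivity)
                (by rw [div_le_one h2rn0, hρdef]; linarith only [hrn0]) hγ0.le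
            have hφd : (0:ℝ) ≤ φ y (2*rn) / φ y ρ :=
              div_nonneg (hφpos y _ h2rn0).le hφρ.le
            calc C * (φ y (2*rn) / φ y ρ) * (ρ/(2*rn))^γ0 * Θ y ρ
                ≤ C * (cU * (4:ℝ)^β2) * 1 * Θ y ρ := by
                  refine mul_le_mul_of_nonneg_right ?_ hΘρp.le
                  exact mul_le_mul (mul_le_mul_of_nonneg_left hφup hCpos.le) hpow1
                    (Real.rpow_nonneg (by positivity) _) (by positivity)
              _ = K3 * Θ y ρ := by rw [hK3def]; ring
          -- Fubini argument bounding the total integral of Θ(·, ρ)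
          set f : M → M → ℝ≥0∞ :=
            fun z y => if y ∈ ball z ρ then ENNReal.ofReal (Θ y ρ) else 0 with hfdef
          have hfm : Measurable (Function.uncurry f) := by
            have hset : MeasurableSet {p : M × M | p.2 ∈ ball p.1 ρ} :=
              measurableSet_lt (measurable_dist.comp (measurable_snd.prodMk measurable_fst))
                measurable_const
            exact Measurable.ite hset
              (ENNReal.measurable_ofReal.comp
                (hΘmeas.comp (measurable_snd.prodMk measurable_const)))
              measurable_const
          have hinner1 : ∀ z : M, ∫⁻ y, f z y ∂μ ≤ ENNReal.ofReal C * μ (univ : Set M) := by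
            intro z
            have e : ∫⁻ y, f z y ∂μ = ∫⁻ y in ball z ρ, ENNReal.ofReal (Θ y ρ) ∂μ := by
              rw [← lintegral_indicator measurableSet_ball]
              refine lintegral_congr fun y => ?_
              simp [hfdef, Set.indicator_apply]
            rw [e]
            exact (hΘvol z ρ hρ0 hρD).trans
              (mul_le_mul_right (measure_mono (subset_univ _)) _)
          have hinner2 : ∀ y : M,
              ∫⁻ z, f z y ∂μ = ENNReal.ofReal (Θ y ρ) * μ (ball y ρ) := by
            intro y
            have e : ∀ z : M, f z y
                = (ball y ρ).indicator (fun _ => ENNReal.ofReal (Θ y ρ)) z := by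
              intro z
              simp [hfdef, Set.indicator_apply, mem_ball, dist_comm]
            simp_rw [e]
            rw [lintegral_indicator measurableSet_ball, setLIntegral_const]
          have hswap : ∫⁻ z, ∫⁻ y, f z y ∂μ ∂μ = ∫⁻ y, ∫⁻ z, f z y ∂μ ∂μ :=
            lintegral_lintegral_swap hfm.aemeasurable
          have hI : ∫⁻ y, ENNReal.ofReal (Θ y ρ) * μ (ball y ρ) ∂μ
              ≤ ENNReal.ofReal C * μ (univ : Set M) * μ (univ : Set M) := by
            have e1 : ∫⁻ y, ENNReal.ofReal (Θ y ρ) * μ (ball y ρ) ∂μ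
                = ∫⁻ y, ∫⁻ z, f z y ∂μ ∂μ :=
              lintegral_congr fun y => (hinner2 y).symm
            rw [e1, ← hswap]
            calc ∫⁻ z, ∫⁻ y, f z y ∂μ ∂μ
                ≤ ∫⁻ _z, ENNReal.ofReal C * μ (univ : Set M) ∂μ := lintegral_mono hinner1
              _ = ENNReal.ofReal C * μ (univ : Set M) * μ (univ : Set M) := lintegral_const _
          have hTbound : ∫⁻ y, ENNReal.ofReal (Θ y ρ) ∂μ
              ≤ ENNReal.ofReal (Cμ * (6:ℝ)^d2) * ENNReal.ofReal C * μ (univ : Set M) := by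
            have hmain : μ (univ : Set M) * ∫⁻ y, ENNReal.ofReal (Θ y ρ) ∂μ
                ≤ μ (univ : Set M) * (ENNReal.ofReal (Cμ * (6:ℝ)^d2) * ENNReal.ofReal C
                    * μ (univ : Set M)) := by
              rw [← lintegral_const_mul' _ _ hμUt]
              have step1 : ∫⁻ y, μ (univ : Set M) * ENNReal.ofReal (Θ y ρ) ∂μ
                  ≤ ∫⁻ y, ENNReal.ofReal (Cμ * (6:ℝ)^d2)
                      * (ENNReal.ofReal (Θ y ρ) * μ (ball y ρ)) ∂μ := by
                refine lintegral_mono fun y => ?_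
                calc μ (univ : Set M) * ENNReal.ofReal (Θ y ρ)
                    ≤ (ENNReal.ofReal (Cμ * (6:ℝ)^d2) * μ (ball y ρ))
                        * ENNReal.ofReal (Θ y ρ) := mul_le_mul_left (hrev y) _
                  _ = ENNReal.ofReal (Cμ * (6:ℝ)^d2)
                        * (ENNReal.ofReal (Θ y ρ) * μ (ball y ρ)) := by ring
              refine step1.trans ?_
              rw [lintegral_const_mul' _ _ ENNReal.ofReal_ne_top]
              calc ENNReal.ofReal (Cμ * (6:ℝ)^d2)
                    * ∫⁻ y, ENNReal.ofReal (Θ y ρ) * μ (ball y ρ) ∂μ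
                  ≤ ENNReal.ofReal (Cμ * (6:ℝ)^d2)
                    * (ENNReal.ofReal C * μ (univ : Set M) * μ (univ : Set M)) :=
                    mul_le_mul_right hI _
                _ = μ (univ : Set M) * (ENNReal.ofReal (Cμ * (6:ℝ)^d2)
                    * ENNReal.ofReal C * μ (univ : Set M)) := by ring
            exact (ENNReal.mul_le_mul_iff_right hμU0 hμUt).mp hmain
          have hUball : μ (univ : Set M) ≤ ENNReal.ofReal (Cμ * (3:ℝ)^d2) * μ (ball x rn) := by
            have h := hVD x rn R' hrn0 (by rw [hR'def]; linarith only [hrnDr, hDr0]) hR'2D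
            rw [hballR' x] at h
            refine h.trans (mul_le_mul_left (ENNReal.ofReal_le_ofReal ?_) _)
            have hratio : R'/rn ≤ 3 := by rw [div_le_iff₀ hrn0, hR'def]; linarith only [hDr2rn]
            have hrp : (R'/rn)^d2 ≤ (3:ℝ)^d2 :=
              Real.rpow_le_rpow (by positivity) hratio hd2.le
            exact mul_le_mul_of_nonneg_left hrp hCμ.le
          calc ∫⁻ y in A n, ENNReal.ofReal (Θ y (2*rn)) ∂μ
              ≤ ∫⁻ y in A n, ENNReal.ofReal (K3 * Θ y ρ) ∂μ := by
                have hmρ : Measurable fun y : M => Θ y ρ :=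
                  hΘmeas.comp (measurable_id.prodMk measurable_const)
                exact setLIntegral_mono
                  (ENNReal.measurable_ofReal.comp (hmρ.const_mul K3))
                  (fun y _ => ENNReal.ofReal_le_ofReal (hΘρ y))
            _ ≤ ∫⁻ y, ENNReal.ofReal (K3 * Θ y ρ) ∂μ := setLIntegral_le_lintegral _ _
            _ = ENNReal.ofReal K3 * ∫⁻ y, ENNReal.ofReal (Θ y ρ) ∂μ := by
                simp_rw [ENNReal.ofReal_mul hK3.le]
                exact lintegral_const_mul' _ _ ENNReal.ofReal_ne_top
            _ ≤ ENNReal.ofReal K3 * (ENNReal.ofReal (Cμ * (6:ℝ)^d2) * ENNReal.ofReal C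
                  * (ENNReal.ofReal (Cμ * (3:ℝ)^d2) * μ (ball x rn))) := by
                refine mul_le_mul_right (hTbound.trans ?_) _
                exact mul_le_mul_right hUball _
            _ ≤ ENNReal.ofReal Kvol * μ (ball x rn) := by
                have e1 : (0:ℝ) ≤ Cμ * (6:ℝ)^d2 := by positivity
                have e2 : (0:ℝ) ≤ Cμ * (6:ℝ)^d2 * C := by positivity
                have key2 : K3 * (Cμ * (6:ℝ)^d2 * C * (Cμ * (3:ℝ)^d2)) ≤ Kvol := by
                  rw [hKvoldef]
                  have h1 : (0:ℝ) < C * (Cμ * (2:ℝ)^d2) := by positivity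
                  refine le_trans (le_of_eq (by ring)) (le_add_of_nonneg_left h1.le)
                calc ENNReal.ofReal K3 * (ENNReal.ofReal (Cμ * (6:ℝ)^d2) * ENNReal.ofReal C
                      * (ENNReal.ofReal (Cμ * (3:ℝ)^d2) * μ (ball x rn)))
                    = ENNReal.ofReal (K3 * (Cμ * (6:ℝ)^d2 * C * (Cμ * (3:ℝ)^d2)))
                        * μ (ball x rn) := by
                      rw [ENNReal.ofReal_mul hK3.le, ENNReal.ofReal_mul e2,
                        ENNReal.ofReal_mul e1]
                      ring
                  _ ≤ ENNReal.ofReal Kvol * μ (ball x rn) :=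
                      mul_le_mul_left (ENNReal.ofReal_le_ofReal key2) _
    -- put the annulus estimate together
    have hmeasΘR : Measurable fun y : M => Θ y (2*rn) :=
      hΘmeas.comp (measurable_id.prodMk measurable_const)
    have hmeasg : Measurable fun y : M =>
        ENNReal.ofReal (B'' * Θ y (2*rn)) / μ (ball x rn) :=
      (ENNReal.measurable_ofReal.comp (hmeasΘR.const_mul B'')).div_const _
    calc ∫⁻ y in A n, J x y ∂μ
        ≤ ∫⁻ y in A n, ENNReal.ofReal (B'' * Θ y (2*rn)) / μ (ball x rn) ∂μ :=
          setLIntegral_mono hmeasg hpt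
      _ = ENNReal.ofReal B'' * (∫⁻ y in A n, ENNReal.ofReal (Θ y (2*rn)) ∂μ)
            * (μ (ball x rn))⁻¹ := by
          simp_rw [ENNReal.ofReal_mul hB''0.le, div_eq_mul_inv]
          rw [lintegral_mul_const' _ _ (ENNReal.inv_ne_top.mpr hμ0),
            lintegral_const_mul' _ _ ENNReal.ofReal_ne_top]
      _ ≤ ENNReal.ofReal B'' * (ENNReal.ofReal Kvol * μ (ball x rn))
            * (μ (ball x rn))⁻¹ :=
          mul_le_mul_left (mul_le_mul_right hsub _) _
      _ = ENNReal.ofReal B'' * ENNReal.ofReal Kvol := by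
          rw [show ENNReal.ofReal B'' * (ENNReal.ofReal Kvol * μ (ball x rn))
              * (μ (ball x rn))⁻¹
              = ENNReal.ofReal B'' * ENNReal.ofReal Kvol
                * (μ (ball x rn) * (μ (ball x rn))⁻¹) by ring,
            ENNReal.mul_inv_cancel hμ0 hμt, mul_one]
      _ ≤ ENNReal.ofReal (B' * q ^ n) := by
          rw [← ENNReal.ofReal_mul hB''0.le]
          refine ENNReal.ofReal_le_ofReal (le_of_eq ?_)
          rw [hB''def, hB'def]; ring
  -- sum up the annuli
  calc ∫⁻ y in (ball x r)ᶜ, J x y ∂μ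
      ≤ ∫⁻ y in ⋃ n, A n, J x y ∂μ := lintegral_mono_set hcover
    _ ≤ ∑' n, ∫⁻ y in A n, J x y ∂μ := lintegral_iUnion_le _ _
    _ ≤ ∑' n, ENNReal.ofReal (B' * q ^ n) := ENNReal.tsum_le_tsum key
    _ = ENNReal.ofReal B' * ∑' n : ℕ, ENNReal.ofReal q ^ n := by
        simp_rw [ENNReal.ofReal_mul hB'.le, ENNReal.ofReal_pow hq0.le]
        exact ENNReal.tsum_mul_left
    _ = ENNReal.ofReal B' * (1 - ENNReal.ofReal q)⁻¹ := by rw [ENNReal.tsum_geometric]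
    _ ≤ ENNReal.ofReal (C' * K1 * Kvol * (1 - q)⁻¹ * Θ x r / φ x r) := by
        rw [show (1 : ℝ≥0∞) - ENNReal.ofReal q = ENNReal.ofReal (1-q) by
            rw [ENNReal.ofReal_sub _ hq0.le, ENNReal.ofReal_one],
          ← ENNReal.ofReal_inv_of_pos h1q, ← ENNReal.ofReal_mul hB'.le]
        refine ENNReal.ofReal_le_ofReal (le_of_eq ?_)
        rw [hB'def]; ring
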